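/- Let Ω ⊆ ℝ² be open and v : ℝ² → ℝ be C² on Ω with v_x(t,x) ≠ 0, v_x(t,x)² + v_x(t,x) ≠ 0, satisfying v_t = v_xx / (v_x² + v_x) on Ω. Let (t₀,x₀) ∈ Ω and set y₀ = x₀ + v(t₀,x₀). Suppose w : ℝ² → ℝ is C² on a neighborhood of (t₀,y₀) and satisfies w(t, x + v(t,x)) = v(t,x) for all (t,x) in a neighborhood of (t₀,x₀) contained in Ω. Then w_y(t₀,y₀) ≠ 0 and w_t(t₀,y₀) = w_yy(t₀,y₀)/w_y(t₀,y₀). (Thus the point transformation t̃ = t, x̃ = x + v, ṽ = v reduces the nonlinear filtration equation with f = (v_x² + v_x)⁻¹ to the potential fast diffusion equation with f = v_x⁻¹.) -/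

import Mathlib

/-- Partial derivative with respect to the first variable (time). -/
noncomputable def pt (u : ℝ × ℝ → ℝ) (p : ℝ × ℝ) : ℝ :=
  deriv (fun s => u (s, p.2)) p.1

/-- Partial derivative with respect to the second variable (space). -/
noncomputable def px (u : ℝ × ℝ → ℝ) (p : ℝ × ℝ) : ℝ :=
  deriv (fun y => u (p.1, y)) p.2

/-- The point transformation `t̃ = t, x̃ = x + v, ṽ = v` reduces the nonlinear filtration
equation with `f = (v_x² + v_x)⁻¹` to the potential fast diffusion equation
`w_t = w_yy / w_y`. -/
theorem filtration_to_potential_fast_diffusion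
    (Ω : Set (ℝ × ℝ)) (hΩ : IsOpen Ω)
    (v : ℝ × ℝ → ℝ) (hv : ContDiffOn ℝ 2 v Ω)
    (hvx : ∀ p ∈ Ω, px v p ≠ 0)
    (hvx' : ∀ p ∈ Ω, (px v p) ^ 2 + px v p ≠ 0)
    (hpde : ∀ p ∈ Ω, pt v p = px (px v) p / ((px v p) ^ 2 + px v p))
    (t₀ x₀ : ℝ) (hmem : (t₀, x₀) ∈ Ω)
    (y₀ : ℝ) (hy₀ : y₀ = x₀ + v (t₀, x₀))
    (w : ℝ × ℝ → ℝ) (hw : ContDiffAt ℝ 2 w (t₀, y₀))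
    (htr : ∀ᶠ p in nhds (t₀, x₀), p ∈ Ω ∧ w (p.1, p.2 + v p) = v p) :
    px w (t₀, y₀) ≠ 0 ∧ pt w (t₀, y₀) = px (px w) (t₀, y₀) / px w (t₀, y₀) := by
  set W : ℝ → ℝ := fun y => w (t₀, y) with hWdef
  set V : ℝ → ℝ := fun x => v (t₀, x) with hVdef
  set g : ℝ → ℝ := fun x => x + V x with hgdef
  set a : ℝ := deriv V x₀ with hadef
  set b : ℝ := deriv (deriv V) x₀ with hbdef
  -- basic nonvanishing
  have ha : a ≠ 0 := hvx _ hmem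
  have haa : a ^ 2 + a ≠ 0 := hvx' _ hmem
  have ha1 : 1 + a ≠ 0 := by
    intro h
    apply haa
    have : a = -1 := by linarith
    rw [this]; ring
  -- the open slice set
  have hScont : Continuous (fun x : ℝ => (t₀, x)) := continuous_const.prodMk continuous_id
  set S : Set ℝ := {x | (t₀, x) ∈ Ω} with hSdef
  have hS : IsOpen S := hΩ.preimage hScont
  have hx₀S : x₀ ∈ S := hmem
  have hVon : ContDiffOn ℝ 2 V S :=
    hv.comp ((contDiff_const.prodMk contDiff_id).contDiffOn) (fun x hx => hx)
  have hVd : ∀ x ∈ S, DifferentiableAt ℝ V x := fun x hx =>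
    ((hVon.contDiffAt (hS.mem_nhds hx)).differentiableAt (by norm_num))
  have hV'on : ContDiffOn ℝ 1 (deriv V) S := hVon.deriv_of_isOpen hS (by norm_num)
  have hV'd : DifferentiableAt ℝ (deriv V) x₀ :=
    (hV'on.contDiffAt (hS.mem_nhds hx₀S)).differentiableAt (by norm_num)
  have hgx₀ : g x₀ = y₀ := by simp [hgdef, hVdef, hy₀]
  -- W is C² near y₀
  have hWev : ∀ᶠ y in nhds y₀, ContDiffAt ℝ 2 W y := by
    have h1 : ∀ᶠ q in nhds (t₀, y₀), ContDiffAt ℝ 2 w q := hw.eventually (by simp)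
    have h2 : Filter.Tendsto (fun y : ℝ => (t₀, y)) (nhds y₀) (nhds (t₀, y₀)) :=
      hScont.continuousAt
    filter_upwards [h2.eventually h1] with y hy
    exact hy.comp y (contDiffAt_const.prodMk contDiffAt_id)
  have hWc2 : ContDiffAt ℝ 2 W y₀ := hWev.self_of_nhds
  -- get open set U where W is C²
  obtain ⟨U, hUsub, hUo, hy₀U⟩ := eventually_nhds_iff.1 hWev
  have hWon : ContDiffOn ℝ 2 W U := fun y hy => (hUsub y hy).contDiffWithinAt
  have hW'on : ContDiffOn ℝ 1 (deriv W) U := hWon.deriv_of_isOpen hUo (by norm_num)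
  have hW'd : DifferentiableAt ℝ (deriv W) y₀ :=
    (hW'on.contDiffAt (hUo.mem_nhds hy₀U)).differentiableAt (by norm_num)
  -- E1 : basic transformation identity in x
  have hE1 : ∀ᶠ x in nhds x₀, W (g x) = V x := by
    have h2 : Filter.Tendsto (fun x : ℝ => (t₀, x)) (nhds x₀) (nhds (t₀, x₀)) :=
      hScont.continuousAt
    filter_upwards [h2.eventually htr] with x hx
    exact hx.2
  -- g continuous near x₀, and values in U eventually
  have hgc : ContinuousAt g x₀ := by
    exact continuousAt_id.add (hVd x₀ hx₀S).continuousAt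
  have hgU : ∀ᶠ x in nhds x₀, g x ∈ U := by
    have : Filter.Tendsto g (nhds x₀) (nhds y₀) := hgx₀ ▸ hgc.tendsto
    exact this.eventually (hUo.eventually_mem hy₀U)
  -- E3 : first-order identity
  have hE3 : ∀ᶠ x in nhds x₀, deriv W (g x) * (1 + deriv V x) = deriv V x := by
    filter_upwards [hE1.eventually_nhds, hS.eventually_mem hx₀S, hgU] with x hx1 hxS hxU
    have hVdx : DifferentiableAt ℝ V x := hVd x hxS
    have hgd : HasDerivAt g (1 + deriv V x) x := (hasDerivAt_id x).add hVdx.hasDerivAt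
    have hWd : DifferentiableAt ℝ W (g x) :=
      ((hUsub _ hxU).differentiableAt (by norm_num))
    have hchain : HasDerivAt (fun x' => W (g x')) (deriv W (g x) * (1 + deriv V x)) x :=
      hWd.hasDerivAt.comp x hgd
    have hVch : HasDerivAt V (deriv W (g x) * (1 + deriv V x)) x :=
      hchain.congr_of_eventuallyEq (hx1.mono fun x' h => h.symm)
    rw [← hVch.deriv]
  -- at x₀
  have hE3x₀ : deriv W y₀ * (1 + a) = a := by
    have := hE3.self_of_nhds
    rwa [hgx₀] at this
  have hpxw : px w (t₀, y₀) = deriv W y₀ := rfl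
  have hA : deriv W y₀ = a / (1 + a) := by
    field_simp
    linarith [hE3x₀]
  have hAne : deriv W y₀ ≠ 0 := by
    rw [hA]; exact div_ne_zero ha ha1
  -- differentiate E3
  have hWg : HasDerivAt (fun x => deriv W (g x)) (deriv (deriv W) y₀ * (1 + a)) x₀ := by
    have hgd : HasDerivAt g (1 + a) x₀ := (hasDerivAt_id x₀).add (hVd x₀ hx₀S).hasDerivAt
    have hW' : HasDerivAt (deriv W) (deriv (deriv W) y₀) (g x₀) := by
      rw [hgx₀]; exact hW'd.hasDerivAt
    exact hW'.comp x₀ hgd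
  have hprod : HasDerivAt (fun x => deriv W (g x) * (1 + deriv V x))
      (deriv (deriv W) y₀ * (1 + a) * (1 + a) + deriv W y₀ * b) x₀ := by
    have hd2 : HasDerivAt (fun x => 1 + deriv V x) b x₀ := hV'd.hasDerivAt.const_add 1
    have := hWg.mul hd2
    simp only [hgx₀, ← hadef] at this
    exact this
  have hE4 : deriv (deriv W) y₀ * (1 + a) * (1 + a) + deriv W y₀ * b = b := by
    have hVch : HasDerivAt (deriv V)
        (deriv (deriv W) y₀ * (1 + a) * (1 + a) + deriv W y₀ * b) x₀ :=
      hprod.congr_of_eventuallyEq (hE3.mono fun x h => h.symm)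
    rw [← hVch.deriv]
  -- time direction
  set T : ℝ → ℝ := fun t => v (t, x₀) with hTdef
  set c : ℝ := deriv T t₀ with hcdef
  have hTc2 : ContDiffAt ℝ 2 T t₀ :=
    (hv.contDiffAt (hΩ.mem_nhds hmem)).comp t₀ (contDiffAt_id.prodMk contDiffAt_const)
  have hTd : DifferentiableAt ℝ T t₀ := hTc2.differentiableAt (by norm_num)
  have hwF : HasFDerivAt w (fderiv ℝ w (t₀, y₀)) (t₀, y₀) :=
    (hw.differentiableAt (by norm_num)).hasFDerivAt
  have hcurve : HasDerivAt (fun t => (t, x₀ + T t)) ((1 : ℝ), c) t₀ :=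
    (hasDerivAt_id t₀).prodMk (hTd.hasDerivAt.const_add x₀)
  have hcurve₀ : (t₀, x₀ + T t₀) = (t₀, y₀) := by simp [hTdef, hy₀]
  have hchainT : HasDerivAt (fun t => w (t, x₀ + T t)) (fderiv ℝ w (t₀, y₀) (1, c)) t₀ := by
    have h : HasFDerivAt w (fderiv ℝ w (t₀, y₀)) (t₀, x₀ + T t₀) := by
      rw [hcurve₀]; exact hwF
    exact h.comp_hasDerivAt t₀ hcurve
  have hE2 : ∀ᶠ t in nhds t₀, w (t, x₀ + T t) = T t := by
    have h2 : Filter.Tendsto (fun t : ℝ => (t, x₀)) (nhds t₀) (nhds (t₀, x₀)) :=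
      (continuous_id.prodMk continuous_const).continuousAt
    filter_upwards [h2.eventually htr] with t ht
    have := ht.2
    simpa [hTdef, add_comm] using this
  have hTc : HasDerivAt T (fderiv ℝ w (t₀, y₀) (1, c)) t₀ :=
    hchainT.congr_of_eventuallyEq (hE2.mono fun t h => h.symm)
  have hceq : c = fderiv ℝ w (t₀, y₀) (1, c) := hTc.deriv
  -- identify fderiv components with pt and px
  have hptw : pt w (t₀, y₀) = fderiv ℝ w (t₀, y₀) (1, 0) := by
    have hcv : HasDerivAt (fun s => (s, y₀)) ((1 : ℝ), (0 : ℝ)) t₀ :=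
      (hasDerivAt_id t₀).prodMk (hasDerivAt_const t₀ y₀)
    exact (hwF.comp_hasDerivAt t₀ hcv).deriv
  have hpxw2 : deriv W y₀ = fderiv ℝ w (t₀, y₀) (0, 1) := by
    have hcv : HasDerivAt (fun s : ℝ => (t₀, s)) ((0 : ℝ), (1 : ℝ)) y₀ :=
      (hasDerivAt_const y₀ t₀).prodMk (hasDerivAt_id y₀)
    exact (hwF.comp_hasDerivAt y₀ hcv).deriv
  have hsplit : fderiv ℝ w (t₀, y₀) (1, c) =
      fderiv ℝ w (t₀, y₀) (1, 0) + c * fderiv ℝ w (t₀, y₀) (0, 1) := by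
    have : ((1 : ℝ), c) = ((1 : ℝ), (0 : ℝ)) + c • ((0 : ℝ), (1 : ℝ)) := by
      simp [Prod.ext_iff, Prod.smul_def]
    rw [this, map_add, map_smul]
    simp
  have hceq2 : c = pt w (t₀, y₀) + c * deriv W y₀ := by
    rw [hptw, hpxw2, ← hsplit]; exact hceq
  -- the PDE for v at (t₀, x₀)
  have hc : c = b / (a ^ 2 + a) := hpde _ hmem
  -- second derivative of W
  have hpxpxw : px (px w) (t₀, y₀) = deriv (deriv W) y₀ := rfl
  have hB : deriv (deriv W) y₀ = b / (1 + a) ^ 3 := by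
    rw [hA] at hE4
    field_simp at hE4 ⊢
    linear_combination hE4
  constructor
  · rw [hpxw]; exact hAne
  · have hP : pt w (t₀, y₀) = c - c * deriv W y₀ := by linarith [hceq2]
    rw [hpxpxw, hpxw, hP, hB, hA, hc]
    have haa' : a ^ 2 + a = a * (1 + a) := by ring
    rw [haa']
    field_simp
    ring
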